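/- Let S be a monoid with zero 0_S and identity 1_S, let λ be a nonempty set, and let σ be any automorphism of the Brandt λ⁰-extension B⁰_λ(S). Then there exist an automorphism h : S → S of the semigroup S, a bijection φ : λ → λ, and a map u : λ → H₁ into the group of units H₁ of S such that σ(α, s, β) = (φ(α), u(α)·h(s)·(u(β))⁻¹, φ(β)) for all α, β ∈ λ and all nonzero s ∈ S, and σ(0) = 0. -/

import Mathlib

/-- The Brandt λ⁰-extension `B⁰_Λ(S)` of a semigroup `S` with zero: its underlying
set is `(Λ × (S \ {0_S}) × Λ) ∪ {0}`, where `none` plays the role of the zero `0`. -/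
def Brandt (Λ S : Type*) [Zero S] : Type _ :=
  Option (Λ × {s : S // s ≠ 0} × Λ)

namespace Brandt

variable {Λ S : Type*}

instance [Zero S] : Zero (Brandt Λ S) := ⟨none⟩

open Classical in
/-- `(α, a, β)·(γ, b, δ) = (α, ab, δ)` if `β = γ` and `ab ≠ 0_S`, and `0` otherwise;
`0` is a two-sided zero. -/
noncomputable instance [Zero S] [Mul S] : Mul (Brandt Λ S) :=
  ⟨fun x y =>
    match x, y with
    | some (α, a, β), some (γ, b, δ) =>
        if h : β = γ ∧ a.1 * b.1 ≠ 0 then some (α, ⟨a.1 * b.1, h.2⟩, δ) else 0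
    | _, _ => 0⟩

open Classical in
/-- `Brandt.mk α s β` is the element `(α, s, β)` of `B⁰_Λ(S)` if `s ≠ 0`, and `0` otherwise. -/
noncomputable def mk [Zero S] (α : Λ) (s : S) (β : Λ) : Brandt Λ S :=
  if h : s ≠ 0 then some (α, ⟨s, h⟩, β) else 0

end Brandt

/-- An automorphism of a semigroup: a bijective map preserving the multiplication. -/
def IsSemigroupAut {T : Type*} [Mul T] (σ : T → T) : Prop :=
  Function.Bijective σ ∧ ∀ x y : T, σ (x * y) = σ x * σ y


section Aux
variable {Λ S : Type*} [MonoidWithZero S]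

/-- Helper constructor for nonzero elements of the Brandt extension. -/
def Brandt.el {Λ S : Type*} [Zero S] (α : Λ) (a : {s : S // s ≠ 0}) (β : Λ) : Brandt Λ S :=
  some (α, a, β)

open Classical in
lemma Brandt.el_mul_el (α β γ δ : Λ) (a b : {s : S // s ≠ 0}) :
    Brandt.el α a β * Brandt.el γ b δ =
      if h : β = γ ∧ a.1 * b.1 ≠ 0 then Brandt.el α ⟨a.1 * b.1, h.2⟩ δ else 0 :=
  rfl

lemma Brandt.el_ne_zero (α β : Λ) (a : {s : S // s ≠ 0}) : Brandt.el α a β ≠ 0 :=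
  Option.some_ne_none _

lemma Brandt.el_inj {α β γ δ : Λ} {a b : {s : S // s ≠ 0}}
    (h : Brandt.el α a β = Brandt.el γ b δ) : α = γ ∧ a = b ∧ β = δ := by
  have h' : (α, a, β) = (γ, b, δ) := Option.some_injective _ h
  exact ⟨congrArg Prod.fst h', congrArg (Prod.fst ∘ Prod.snd) h',
    congrArg (Prod.snd ∘ Prod.snd) h'⟩

lemma Brandt.cases' (x : Brandt Λ S) :
    x = 0 ∨ ∃ α a β, x = Brandt.el α a β := by
  rcases x with _ | ⟨α, a, β⟩
  · exact Or.inl rfl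
  · exact Or.inr ⟨α, a, β, rfl⟩

lemma Brandt.zero_mul' (y : Brandt Λ S) : (0 : Brandt Λ S) * y = 0 := rfl

lemma Brandt.mul_zero' (x : Brandt Λ S) : x * (0 : Brandt Λ S) = 0 := by
  rcases x with _ | ⟨α, a, β⟩ <;> rfl

lemma sigma_zero (σ : Brandt Λ S → Brandt Λ S) (hσ : IsSemigroupAut σ) : σ 0 = 0 := by
  obtain ⟨x, hx⟩ := hσ.1.2 0
  have h := hσ.2 x 0
  rw [Brandt.mul_zero', hx, Brandt.zero_mul'] at h
  exact h
end Aux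

section Aux2
variable {Λ S : Type*} [MonoidWithZero S]

lemma Brandt.el_eq_el {α β : Λ} {a b : {s : S // s ≠ 0}} (h : a.1 = b.1) :
    Brandt.el α a β = Brandt.el α b β := by
  cases Subtype.ext h; rfl

lemma sigma_ne_zero (σ : Brandt Λ S → Brandt Λ S) (hσ : IsSemigroupAut σ)
    {x : Brandt Λ S} (hx : x ≠ 0) : σ x ≠ 0 := fun h =>
  hx (hσ.1.1 (h.trans (sigma_zero σ hσ).symm))

lemma aux_e (h1 : (1:S) ≠ 0)
    (σ : Brandt Λ S → Brandt Λ S) (hσ : IsSemigroupAut σ) (α : Λ) :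
    ∃ γ, σ (Brandt.el α ⟨1, h1⟩ α) = Brandt.el γ ⟨1, h1⟩ γ := by
  set one : {s : S // s ≠ 0} := ⟨1, h1⟩ with hone
  have h11 : (1:S) * 1 ≠ 0 := by simpa using h1
  have hee : Brandt.el α one α * Brandt.el α one α = Brandt.el (S := S) α one α := by
    rw [Brandt.el_mul_el, dif_pos ⟨rfl, h11⟩]
    exact Brandt.el_eq_el (one_mul _)
  have hne : σ (Brandt.el α one α) ≠ 0 :=
    sigma_ne_zero σ hσ (Brandt.el_ne_zero _ _ _)
  rcases Brandt.cases' (σ (Brandt.el α one α)) with h0 | ⟨γ, t, δ, hγ⟩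
  · exact absurd h0 hne
  have hid : Brandt.el γ t δ * Brandt.el γ t δ = Brandt.el γ t δ := by
    rw [← hγ, ← hσ.2, hee]
  have hδγ : δ = γ := by
    rw [Brandt.el_mul_el] at hid
    by_cases hc : δ = γ ∧ t.1 * t.1 ≠ 0
    · exact hc.1
    · rw [dif_neg hc] at hid; exact absurd hid.symm (Brandt.el_ne_zero _ _ _)
  rw [hδγ] at hγ
  clear hid
  obtain ⟨x, hx⟩ := hσ.1.2 (Brandt.el γ one γ)
  have habs : Brandt.el α one α * x = 0 ∨ Brandt.el α one α * x = x := by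
    rcases Brandt.cases' x with h0 | ⟨α', a, β', h'⟩
    · rw [h0, Brandt.mul_zero']; exact Or.inl rfl
    · subst h'
      rw [Brandt.el_mul_el]
      by_cases hc : α = α' ∧ one.1 * a.1 ≠ 0
      · right
        rw [dif_pos hc]
        obtain ⟨h1', _⟩ := hc
        subst h1'
        exact Brandt.el_eq_el (one_mul _)
      · left; rw [dif_neg hc]
  have hprod : σ (Brandt.el α one α) * σ x = Brandt.el γ ⟨t.1 * 1, by simpa using t.2⟩ γ := by
    rw [hγ, hx, Brandt.el_mul_el, dif_pos ⟨rfl, by simpa [hone] using t.2⟩]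
  rcases habs with h0 | hX
  · have : (0 : Brandt Λ S) = Brandt.el γ ⟨t.1 * 1, by simpa using t.2⟩ γ := by
      rw [← hprod, ← hσ.2, h0, sigma_zero σ hσ]
    exact absurd this.symm (Brandt.el_ne_zero _ _ _)
  · have hfin : Brandt.el γ one γ = Brandt.el γ ⟨t.1 * 1, by simpa using t.2⟩ γ := by
      rw [← hprod, ← hσ.2, hX, hx]
    obtain ⟨-, ht, -⟩ := Brandt.el_inj hfin
    refine ⟨γ, ?_⟩
    rw [hγ]
    exact Brandt.el_eq_el (by simpa using (congrArg Subtype.val ht).symm)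
end Aux2

lemma IsSemigroupAut.symm' {T : Type*} [Mul T] {σ : T → T} (hσ : IsSemigroupAut σ) :
    IsSemigroupAut ⇑(Equiv.ofBijective σ hσ.1).symm := by
  refine ⟨(Equiv.ofBijective σ hσ.1).symm.bijective, fun x y => ?_⟩
  apply hσ.1.1
  rw [hσ.2]
  simp [Equiv.ofBijective_apply_symm_apply]


/-- Let `S` be a monoid with zero, `Λ` a nonempty set, and `σ` any automorphism of the
Brandt λ⁰-extension `B⁰_Λ(S)`. Then there exist an automorphism `h` of the semigroup `S`,
a bijection `φ : Λ → Λ`, and a map `u : Λ → H₁` into the group of units `H₁` of `S` such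
that `σ(α, s, β) = (φ(α), u(α)·h(s)·(u(β))⁻¹, φ(β))` for all `α, β ∈ Λ` and all nonzero
`s ∈ S`, and `σ(0) = 0`. -/
theorem stmt_1 {Λ S : Type*} [Nonempty Λ] [MonoidWithZero S]
    (σ : Brandt Λ S → Brandt Λ S) (hσ : IsSemigroupAut σ) :
    ∃ (h : S ≃* S) (φ : Λ ≃ Λ) (u : Λ → Sˣ),
      (∀ (α β : Λ) (s : S), s ≠ 0 →
        σ (Brandt.mk α s β) = Brandt.mk (φ α) ((u α : S) * h s * ((u β)⁻¹ : Sˣ)) (φ β)) ∧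
      σ 0 = 0 := by
  classical
  by_cases h1 : (1 : S) = 0
  · have hall : ∀ s : S, s = 0 := fun s => by rw [← mul_one s, h1, mul_zero]
    exact ⟨MulEquiv.refl S, Equiv.refl Λ, fun _ => 1,
      fun α β s hs => absurd (hall s) hs, sigma_zero σ hσ⟩
  choose φ₀ hφ₀ using aux_e h1 σ hσ
  have hσ' : IsSemigroupAut ⇑(Equiv.ofBijective σ hσ.1).symm := hσ.symm'
  choose ψ₀ hψ₀ using aux_e h1 _ hσ'
  have hφψ : ∀ γ, φ₀ (ψ₀ γ) = γ := by
    intro γ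
    have h' : σ ((Equiv.ofBijective σ hσ.1).symm (Brandt.el γ ⟨1, h1⟩ γ))
        = Brandt.el γ ⟨1, h1⟩ γ := Equiv.ofBijective_apply_symm_apply _ _ _
    rw [hψ₀ γ, hφ₀ (ψ₀ γ)] at h'
    exact (Brandt.el_inj h').1
  have hψφ : ∀ α, ψ₀ (φ₀ α) = α := by
    intro α
    have h' : (Equiv.ofBijective σ hσ.1).symm (σ (Brandt.el α ⟨1, h1⟩ α))
        = Brandt.el α ⟨1, h1⟩ α := (Equiv.ofBijective σ hσ.1).symm_apply_apply _
    rw [hφ₀ α, hψ₀ (φ₀ α)] at h'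
    exact (Brandt.el_inj h').1
  have φinj : Function.Injective φ₀ := Function.LeftInverse.injective hψφ
  -- the coordinate functions
  have hgex : ∀ (α β : Λ) (a : {s : S // s ≠ 0}),
      ∃ g, σ (Brandt.el α a β) = Brandt.el (φ₀ α) g (φ₀ β) := by
    intro α β a
    have hne := sigma_ne_zero σ hσ (Brandt.el_ne_zero α β a)
    rcases Brandt.cases' (σ (Brandt.el α a β)) with h0 | ⟨γ, g, δ, hx⟩
    · exact absurd h0 hne
    have hL : Brandt.el α ⟨1, h1⟩ α * Brandt.el α a β = Brandt.el α a β := by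
      rw [Brandt.el_mul_el, dif_pos ⟨rfl, by simpa using a.2⟩]
      exact Brandt.el_eq_el (one_mul _)
    have hR : Brandt.el α a β * Brandt.el β ⟨1, h1⟩ β = Brandt.el α a β := by
      rw [Brandt.el_mul_el, dif_pos ⟨rfl, by simpa using a.2⟩]
      exact Brandt.el_eq_el (mul_one _)
    have hγ : φ₀ α = γ := by
      have h2 : Brandt.el (φ₀ α) ⟨1, h1⟩ (φ₀ α) * Brandt.el γ g δ = Brandt.el γ g δ := by
        rw [← hφ₀, ← hx, ← hσ.2, hL]
      rw [Brandt.el_mul_el] at h2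
      by_cases hc : φ₀ α = γ ∧ (⟨1, h1⟩ : {s : S // s ≠ 0}).1 * g.1 ≠ 0
      · exact hc.1
      · rw [dif_neg hc] at h2; exact absurd h2.symm (Brandt.el_ne_zero _ _ _)
    have hδ : δ = φ₀ β := by
      have h2 : Brandt.el γ g δ * Brandt.el (φ₀ β) ⟨1, h1⟩ (φ₀ β) = Brandt.el γ g δ := by
        rw [← hφ₀, ← hx, ← hσ.2, hR]
      rw [Brandt.el_mul_el] at h2
      by_cases hc : δ = φ₀ β ∧ g.1 * (⟨1, h1⟩ : {s : S // s ≠ 0}).1 ≠ 0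
      · exact hc.1
      · rw [dif_neg hc] at h2; exact absurd h2.symm (Brandt.el_ne_zero _ _ _)
    exact ⟨g, by rw [hx, hγ, hδ]⟩
  choose gfun hgfun using hgex
  have guniq : ∀ {α β γ δ : Λ} {a g : {s : S // s ≠ 0}},
      σ (Brandt.el α a β) = Brandt.el γ g δ → gfun α β a = g := by
    intro α β γ δ a g h
    exact (Brandt.el_inj ((hgfun α β a).symm.trans h)).2.1
  have key : ∀ (α β δ : Λ) (a b : {s : S // s ≠ 0}) (hab : a.1 * b.1 ≠ 0),
      (gfun α δ ⟨a.1 * b.1, hab⟩).1 = (gfun α β a).1 * (gfun β δ b).1 := by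
    intro α β δ a b hab
    have hprod : Brandt.el α a β * Brandt.el β b δ = Brandt.el α ⟨a.1 * b.1, hab⟩ δ := by
      rw [Brandt.el_mul_el, dif_pos ⟨rfl, hab⟩]
    have h2 : Brandt.el (φ₀ α) (gfun α δ ⟨a.1 * b.1, hab⟩) (φ₀ δ)
        = Brandt.el (φ₀ α) (gfun α β a) (φ₀ β) * Brandt.el (φ₀ β) (gfun β δ b) (φ₀ δ) := by
      rw [← hgfun, ← hgfun, ← hgfun, ← hσ.2, hprod]
    rw [Brandt.el_mul_el] at h2
    by_cases hc : φ₀ β = φ₀ β ∧ (gfun α β a).1 * (gfun β δ b).1 ≠ 0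
    · rw [dif_pos hc] at h2
      exact congrArg Subtype.val (Brandt.el_inj h2).2.1
    · rw [dif_neg hc] at h2; exact absurd h2 (Brandt.el_ne_zero _ _ _)
  have key0 : ∀ (α β δ : Λ) (a b : {s : S // s ≠ 0}), a.1 * b.1 = 0 →
      (gfun α β a).1 * (gfun β δ b).1 = 0 := by
    intro α β δ a b hab
    have hprod : Brandt.el α a β * Brandt.el β b δ = 0 := by
      rw [Brandt.el_mul_el, dif_neg]
      rintro ⟨-, h⟩; exact h hab
    have h2 : (0 : Brandt Λ S)
        = Brandt.el (φ₀ α) (gfun α β a) (φ₀ β) * Brandt.el (φ₀ β) (gfun β δ b) (φ₀ δ) := by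
      rw [← hgfun, ← hgfun, ← hσ.2, hprod, sigma_zero σ hσ]
    rw [Brandt.el_mul_el] at h2
    by_cases hc : φ₀ β = φ₀ β ∧ (gfun α β a).1 * (gfun β δ b).1 ≠ 0
    · rw [dif_pos hc] at h2; exact absurd h2.symm (Brandt.el_ne_zero _ _ _)
    · push_neg at hc; exact hc rfl
  have g_one : ∀ α, gfun α α ⟨1, h1⟩ = ⟨1, h1⟩ := fun α => guniq (hφ₀ α)
  obtain ⟨α₀⟩ := ‹Nonempty Λ›
  have hbij : Function.Bijective (fun a : {s : S // s ≠ 0} => gfun α₀ α₀ a) := by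
    constructor
    · intro a b hab2
      have hab2' : gfun α₀ α₀ a = gfun α₀ α₀ b := hab2
      have h3 : σ (Brandt.el α₀ a α₀) = σ (Brandt.el α₀ b α₀) := by
        rw [hgfun, hgfun, hab2']
      exact (Brandt.el_inj (hσ.1.1 h3)).2.1
    · intro t
      obtain ⟨x, hx⟩ := hσ.1.2 (Brandt.el (φ₀ α₀) t (φ₀ α₀))
      rcases Brandt.cases' x with h0 | ⟨α', a, β', h'⟩
      · rw [h0, sigma_zero σ hσ] at hx; exact absurd hx.symm (Brandt.el_ne_zero _ _ _)
      subst h'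
      rw [hgfun] at hx
      obtain ⟨hα, hg, hβ⟩ := Brandt.el_inj hx
      rw [φinj hα, φinj hβ] at hg
      exact ⟨a, hg⟩
  set E₀ := Equiv.ofBijective _ hbij with hE₀
  set Hfun : S → S := fun s => if hs : s = 0 then 0 else (gfun α₀ α₀ ⟨s, hs⟩).1 with hHfun
  set Hinv : S → S := fun s => if hs : s = 0 then 0 else (E₀.symm ⟨s, hs⟩).1 with hHinv
  have hHs : ∀ (s : S) (hs : s ≠ 0), Hfun s = (gfun α₀ α₀ ⟨s, hs⟩).1 := by
    intro s hs; simp only [hHfun]; rw [dif_neg hs]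
  have hH0 : Hfun 0 = 0 := by simp [hHfun]
  have hleft : Function.LeftInverse Hinv Hfun := by
    intro s
    by_cases hs : s = 0
    · subst hs; rw [hH0]; simp [hHinv]
    · have hne := (gfun α₀ α₀ ⟨s, hs⟩).2
      rw [hHs s hs]
      simp only [hHinv]
      rw [dif_neg hne]
      have h4 : (⟨(gfun α₀ α₀ ⟨s, hs⟩).1, hne⟩ : {s : S // s ≠ 0}) = E₀ ⟨s, hs⟩ := rfl
      rw [h4, E₀.symm_apply_apply]
  have hright : Function.RightInverse Hinv Hfun := by
    intro s
    by_cases hs : s = 0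
    · subst hs
      have h6 : Hinv 0 = 0 := by simp [hHinv]
      rw [h6, hH0]
    · have h5 : Hinv s = (E₀.symm ⟨s, hs⟩).1 := by simp only [hHinv]; rw [dif_neg hs]
      rw [h5]
      have hne := (E₀.symm ⟨s, hs⟩).2
      rw [hHs _ hne]
      have h4 : (gfun α₀ α₀ ⟨(E₀.symm ⟨s, hs⟩).1, hne⟩) = E₀ (E₀.symm ⟨s, hs⟩) := rfl
      rw [h4, E₀.apply_symm_apply]
  have hmul : ∀ s t : S, Hfun (s * t) = Hfun s * Hfun t := by
    intro s t
    by_cases hs : s = 0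
    · subst hs; rw [zero_mul, hH0, zero_mul]
    by_cases ht : t = 0
    · subst ht; rw [mul_zero, hH0, mul_zero]
    by_cases hst : s * t = 0
    · rw [hHs s hs, hHs t ht, hst, hH0]
      exact (key0 α₀ α₀ α₀ ⟨s, hs⟩ ⟨t, ht⟩ hst).symm
    · rw [hHs _ hst, hHs s hs, hHs t ht]
      exact key α₀ α₀ α₀ ⟨s, hs⟩ ⟨t, ht⟩ hst
  have huv : ∀ α, (gfun α α₀ ⟨1, h1⟩).1 * (gfun α₀ α ⟨1, h1⟩).1 = 1 := by
    intro α
    have h11 : (1 : S) * 1 ≠ 0 := by simpa using h1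
    have h5 := key α α₀ α ⟨1, h1⟩ ⟨1, h1⟩ h11
    rw [show (⟨(1:S) * 1, h11⟩ : {s : S // s ≠ 0}) = ⟨1, h1⟩ from Subtype.ext (mul_one 1),
      g_one α] at h5
    exact h5.symm
  have hvu : ∀ α, (gfun α₀ α ⟨1, h1⟩).1 * (gfun α α₀ ⟨1, h1⟩).1 = 1 := by
    intro α
    have h11 : (1 : S) * 1 ≠ 0 := by simpa using h1
    have h5 := key α₀ α α₀ ⟨1, h1⟩ ⟨1, h1⟩ h11
    rw [show (⟨(1:S) * 1, h11⟩ : {s : S // s ≠ 0}) = ⟨1, h1⟩ from Subtype.ext (mul_one 1),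
      g_one α₀] at h5
    exact h5.symm
  refine ⟨MulEquiv.mk ⟨Hfun, Hinv, hleft, hright⟩ hmul, Equiv.mk φ₀ ψ₀ hψφ hφψ,
    fun α => Units.mk (gfun α α₀ ⟨1, h1⟩).1 (gfun α₀ α ⟨1, h1⟩).1 (huv α) (hvu α),
    ?_, sigma_zero σ hσ⟩
  intro α β s hs
  have hmk : Brandt.mk α s β = Brandt.el α ⟨s, hs⟩ β := dif_pos hs
  have hs1 : (1 : S) * s ≠ 0 := by simpa using hs
  have e1 := key α α₀ α₀ ⟨1, h1⟩ ⟨s, hs⟩ hs1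
  rw [show (⟨(1:S) * s, hs1⟩ : {s : S // s ≠ 0}) = ⟨s, hs⟩ from Subtype.ext (one_mul s)] at e1
  have hs2 : s * (1 : S) ≠ 0 := by simpa using hs
  have e2 := key α α₀ β ⟨s, hs⟩ ⟨1, h1⟩ hs2
  rw [show (⟨s * (1:S), hs2⟩ : {s : S // s ≠ 0}) = ⟨s, hs⟩ from Subtype.ext (mul_one s)] at e2
  have hval : (gfun α β ⟨s, hs⟩).1
      = (gfun α α₀ ⟨1, h1⟩).1 * Hfun s * (gfun α₀ β ⟨1, h1⟩).1 := by
    rw [e2, e1, hHs s hs]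
  have hvne : (gfun α α₀ ⟨1, h1⟩).1 * Hfun s * (gfun α₀ β ⟨1, h1⟩).1 ≠ 0 :=
    hval ▸ (gfun α β ⟨s, hs⟩).2
  have hrhs : Brandt.mk (φ₀ α)
        ((gfun α α₀ ⟨1, h1⟩).1 * Hfun s * (gfun α₀ β ⟨1, h1⟩).1) (φ₀ β)
      = Brandt.el (φ₀ α) ⟨_, hvne⟩ (φ₀ β) := dif_pos hvne
  rw [hmk, hgfun]
  exact ((hrhs.trans (Brandt.el_eq_el hval.symm)).symm : _)
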